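/- Let C be a binary linear code of length n whose extended code C_ex is transitive invariant. For even w, L_w(C) = ((n+1-w)/(n+1)) · L_w(C_ex) − N_w(C), where N_w(C) is the number of only-odd-decomposable codewords of weight w in C; in particular L_w(C) ≤ ((n+1-w)/(n+1)) · L_w(C_ex). -/

import Mathlib

open Finset

/-- Support of a binary vector: the set of nonzero coordinates. -/
def supp {n : ℕ} (v : Fin n → ZMod 2) : Finset (Fin n) :=
  Finset.univ.filter fun i => v i ≠ 0

/-- Hamming weight. -/
def wt {n : ℕ} (v : Fin n → ZMod 2) : ℕ := (supp v).card

/-- A nonzero codeword of `D` is a zero neighbor (minimal codeword) if no nonzero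
codeword of `D` has support strictly contained in its support. -/
def IsZeroNeighbor {n : ℕ} (D : Set (Fin n → ZMod 2)) (v : Fin n → ZMod 2) : Prop :=
  v ∈ D ∧ v ≠ 0 ∧ ∀ v' ∈ D, v' ≠ 0 → ¬ supp v' ⊂ supp v

/-- `v` is decomposable in `D` if it is the sum of two nonzero codewords of `D`
with disjoint supports. -/
def Decomposable {n : ℕ} (D : Set (Fin n → ZMod 2)) (v : Fin n → ZMod 2) : Prop :=
  ∃ v1 v2, v1 ∈ D ∧ v2 ∈ D ∧ v1 ≠ 0 ∧ v2 ≠ 0 ∧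
    Disjoint (supp v1) (supp v2) ∧ v = v1 + v2

/-- Extension of a vector by its overall parity bit. -/
def extVec {n : ℕ} (v : Fin n → ZMod 2) : Fin (n + 1) → ZMod 2 :=
  Fin.snoc v (∑ i, v i)

/-- The extended code. -/
def extCode {n : ℕ} (C : Submodule (ZMod 2) (Fin n → ZMod 2)) :
    Set (Fin (n + 1) → ZMod 2) :=
  extVec '' (C : Set (Fin n → ZMod 2))

/-- An even-weight codeword is only-odd-decomposable if it is decomposable and in every
decomposition into nonzero disjoint-support codewords both parts have odd weight. -/
def OnlyOddDecomposable {n : ℕ} (C : Submodule (ZMod 2) (Fin n → ZMod 2))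
    (v : Fin n → ZMod 2) : Prop :=
  Even (wt v) ∧ Decomposable (C : Set (Fin n → ZMod 2)) v ∧
    ∀ v1 v2, v1 ∈ C → v2 ∈ C → v1 ≠ 0 → v2 ≠ 0 →
      Disjoint (supp v1) (supp v2) → v = v1 + v2 → Odd (wt v1) ∧ Odd (wt v2)

/-- `L_w(D)`: the number of zero neighbors of weight `w` in `D`. -/
noncomputable def Lw {n : ℕ} (D : Set (Fin n → ZMod 2)) (w : ℕ) : ℕ :=
  {v : Fin n → ZMod 2 | IsZeroNeighbor D v ∧ wt v = w}.ncard

/-- `N_w(C)`: the number of only-odd-decomposable codewords of weight `w` in `C`. -/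
noncomputable def Nw {n : ℕ} (C : Submodule (ZMod 2) (Fin n → ZMod 2)) (w : ℕ) : ℕ :=
  {v : Fin n → ZMod 2 | v ∈ C ∧ OnlyOddDecomposable C v ∧ wt v = w}.ncard

/-- Action of a coordinate permutation on a vector. -/
def permVec {n : ℕ} (π : Equiv.Perm (Fin n)) (v : Fin n → ZMod 2) : Fin n → ZMod 2 :=
  v ∘ π.symm

/-- `π` is an automorphism of the code `D`. -/
def IsAut {n : ℕ} (D : Set (Fin n → ZMod 2)) (π : Equiv.Perm (Fin n)) : Prop :=
  permVec π '' D = D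

/-- The even weight subcode of `C`, as a set. -/
def evenSub {n : ℕ} (C : Submodule (ZMod 2) (Fin n → ZMod 2)) :
    Set (Fin n → ZMod 2) :=
  {v : Fin n → ZMod 2 | v ∈ C ∧ Even (wt v)}

lemma mem_supp {n : ℕ} {v : Fin n → ZMod 2} {i : Fin n} : i ∈ supp v ↔ v i ≠ 0 := by
  simp [supp]

lemma zmod2_cases (a : ZMod 2) : a = 0 ∨ a = 1 := by
  fin_cases a
  · exact Or.inl rfl
  · exact Or.inr rfl

lemma supp_eq_empty {n : ℕ} {v : Fin n → ZMod 2} : supp v = ∅ ↔ v = 0 := by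
  constructor
  · intro h; funext i
    by_contra hi
    have : i ∈ supp v := mem_supp.2 hi
    simp [h] at this
  · intro h; subst h; ext i; simp [mem_supp]

lemma ne_zero_of_supp {n : ℕ} {v : Fin n → ZMod 2} (h : (supp v).Nonempty) : v ≠ 0 := by
  intro h0
  rw [← supp_eq_empty] at h0
  simp [h0] at h

lemma supp_add_of_disjoint {n : ℕ} {v1 v2 : Fin n → ZMod 2}
    (h : Disjoint (supp v1) (supp v2)) : supp (v1 + v2) = supp v1 ∪ supp v2 := by
  ext i
  simp only [mem_supp, mem_union]
  have hd : ¬ (v1 i ≠ 0 ∧ v2 i ≠ 0) := by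
    intro ⟨a, b⟩
    exact Finset.disjoint_left.1 h (mem_supp.2 a) (mem_supp.2 b)
  have e : (v1 + v2) i = v1 i + v2 i := rfl
  rcases zmod2_cases (v1 i) with h1 | h1 <;> rcases zmod2_cases (v2 i) with h2 | h2 <;>
    simp_all [e]

lemma zmod2_ne_zero {a : ZMod 2} (h : a ≠ 0) : a = 1 := by
  rcases zmod2_cases a with h' | h' <;> simp_all

lemma supp_add_of_subset {n : ℕ} {v u : Fin n → ZMod 2}
    (h : supp u ⊆ supp v) : supp (v + u) = supp v \ supp u := by
  ext i
  simp only [mem_supp, mem_sdiff]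
  have e : (v + u) i = v i + u i := rfl
  rcases zmod2_cases (u i) with h1 | h1
  · simp [e, h1, mem_supp]
  · have hv : v i = 1 := zmod2_ne_zero (mem_supp.1 (h (mem_supp.2 (by simp [h1]))))
    have : (1 : ZMod 2) + 1 = 0 := by decide
    simp [e, h1, hv, mem_supp, this]

lemma add_add_self {n : ℕ} (v u : Fin n → ZMod 2) : u + (v + u) = v := by
  funext i
  have e : (u + (v + u)) i = u i + (v i + u i) := rfl
  rw [e]
  have t : (1 : ZMod 2) + 1 = 0 := by decide
  rcases zmod2_cases (u i) with h1 | h1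
  · simp [h1]
  · rw [h1]
    rw [add_comm (v i) 1, ← add_assoc, t, zero_add]

lemma sum_eq_wt {n : ℕ} (v : Fin n → ZMod 2) : ∑ i, v i = (wt v : ZMod 2) := by
  rw [wt, ← Finset.sum_filter_ne_zero Finset.univ]
  have : ∀ i ∈ supp v, v i = 1 := fun i hi => zmod2_ne_zero (mem_supp.1 hi)
  rw [show Finset.filter (fun x => v x ≠ 0) Finset.univ = supp v from rfl,
    Finset.sum_congr rfl this]
  simp

lemma wt_even_iff {n : ℕ} (v : Fin n → ZMod 2) : (∑ i, v i) = 0 ↔ Even (wt v) := by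
  rw [sum_eq_wt, ZMod.natCast_eq_zero_iff]
  exact even_iff_two_dvd.symm

lemma extVec_castSucc {n : ℕ} (v : Fin n → ZMod 2) (i : Fin n) :
    extVec v (Fin.castSucc i) = v i := Fin.snoc_castSucc _ _ _

lemma extVec_last {n : ℕ} (v : Fin n → ZMod 2) :
    extVec v (Fin.last n) = ∑ i, v i := Fin.snoc_last _ _

lemma extVec_injective {n : ℕ} : Function.Injective (extVec (n := n)) := by
  intro v w h
  funext i
  have := congrFun h (Fin.castSucc i)
  rwa [extVec_castSucc, extVec_castSucc] at this

lemma extVec_eq_zero {n : ℕ} {v : Fin n → ZMod 2} : extVec v = 0 ↔ v = 0 := by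
  constructor
  · intro h
    funext i
    have := congrFun h (Fin.castSucc i)
    rwa [extVec_castSucc] at this
  · intro h; subst h; funext j
    refine Fin.lastCases ?_ ?_ j
    · simp [extVec_last]
    · intro i; simp [extVec_castSucc]

def csEmb {n : ℕ} : Fin n ↪ Fin (n + 1) := ⟨Fin.castSucc, Fin.castSucc_injective n⟩

lemma supp_extVec_of_even {n : ℕ} {v : Fin n → ZMod 2} (h : Even (wt v)) :
    supp (extVec v) = (supp v).map csEmb := by
  ext j
  simp only [mem_supp, Finset.mem_map]
  refine Fin.lastCases ?_ ?_ j
  · rw [extVec_last, (wt_even_iff v).2 h]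
    constructor
    · intro hc; exact absurd rfl hc
    · rintro ⟨i, hi, hie⟩
      exact absurd hie (by exact (Fin.castSucc_lt_last i).ne)
  · intro i
    rw [extVec_castSucc]
    constructor
    · intro hi; exact ⟨i, hi, rfl⟩
    · rintro ⟨i', hi', hie⟩
      have : i' = i := Fin.castSucc_injective n hie
      subst this; exact hi'

lemma wt_extVec_of_even {n : ℕ} {v : Fin n → ZMod 2} (h : Even (wt v)) :
    wt (extVec v) = wt v := by
  rw [wt, supp_extVec_of_even h, Finset.card_map]; rfl

lemma extVec_add {n : ℕ} (v w : Fin n → ZMod 2) :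
    extVec (v + w) = extVec v + extVec w := by
  funext j
  refine Fin.lastCases ?_ ?_ j
  · show extVec (v + w) (Fin.last n) = extVec v (Fin.last n) + extVec w (Fin.last n)
    rw [extVec_last, extVec_last, extVec_last, ← Finset.sum_add_distrib]
    rfl
  · intro i
    show extVec (v + w) (Fin.castSucc i) = extVec v (Fin.castSucc i) + extVec w (Fin.castSucc i)
    rw [extVec_castSucc, extVec_castSucc, extVec_castSucc]
    rfl

lemma permVec_permVec_symm {n : ℕ} (π : Equiv.Perm (Fin n)) (v : Fin n → ZMod 2) :
    permVec π.symm (permVec π v) = v := by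
  funext i; simp [permVec]

lemma permVec_symm_permVec {n : ℕ} (π : Equiv.Perm (Fin n)) (v : Fin n → ZMod 2) :
    permVec π (permVec π.symm v) = v := by
  funext i; simp [permVec]

lemma supp_permVec {n : ℕ} (π : Equiv.Perm (Fin n)) (v : Fin n → ZMod 2) :
    supp (permVec π v) = (supp v).map π.toEmbedding := by
  ext j
  simp only [mem_supp, Finset.mem_map, Equiv.coe_toEmbedding]
  constructor
  · intro hj; exact ⟨π.symm j, hj, π.apply_symm_apply j⟩
  · rintro ⟨i, hi, rfl⟩
    show v (π.symm (π i)) ≠ 0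
    rwa [π.symm_apply_apply]

lemma wt_permVec {n : ℕ} (π : Equiv.Perm (Fin n)) (v : Fin n → ZMod 2) :
    wt (permVec π v) = wt v := by
  rw [wt, supp_permVec, Finset.card_map]; rfl

lemma permVec_ne_zero {n : ℕ} {π : Equiv.Perm (Fin n)} {v : Fin n → ZMod 2} (h : v ≠ 0) :
    permVec π v ≠ 0 := by
  intro h0
  apply h
  have := congrArg (permVec π.symm) h0
  rw [permVec_permVec_symm] at this
  rw [this]
  funext i; rfl

lemma isAut_symm {n : ℕ} {D : Set (Fin n → ZMod 2)} {π : Equiv.Perm (Fin n)}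
    (h : IsAut D π) : IsAut D π.symm := by
  unfold IsAut at *
  conv_lhs => rw [← h]
  rw [← Set.image_comp]
  have : permVec π.symm ∘ permVec π = id := by
    funext v; exact permVec_permVec_symm π v
  rw [this, Set.image_id]

lemma mem_of_isAut {n : ℕ} {D : Set (Fin n → ZMod 2)} {π : Equiv.Perm (Fin n)}
    (h : IsAut D π) {v : Fin n → ZMod 2} (hv : v ∈ D) : permVec π v ∈ D := by
  rw [← h]; exact ⟨v, hv, rfl⟩

lemma zn_permVec {n : ℕ} {D : Set (Fin n → ZMod 2)} {π : Equiv.Perm (Fin n)}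
    (hA : IsAut D π) {v : Fin n → ZMod 2} (h : IsZeroNeighbor D v) :
    IsZeroNeighbor D (permVec π v) := by
  obtain ⟨hm, hz, hmin⟩ := h
  refine ⟨mem_of_isAut hA hm, permVec_ne_zero hz, ?_⟩
  intro v' hv' hz' hss
  have h2 : permVec π.symm v' ∈ D := mem_of_isAut (isAut_symm hA) hv'
  refine hmin _ h2 (permVec_ne_zero hz') ?_
  rw [supp_permVec]
  have h3 := (Finset.map_ssubset_map (f := π.symm.toEmbedding)).2 hss
  rwa [supp_permVec, Finset.map_map, show π.toEmbedding.trans π.symm.toEmbedding = (Equiv.refl _).toEmbedding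
    from Function.Embedding.ext fun i => π.symm_apply_apply i, Equiv.refl_toEmbedding,
    Finset.map_refl] at h3

lemma zn_ext {n : ℕ} (C : Submodule (ZMod 2) (Fin n → ZMod 2)) {v : Fin n → ZMod 2}
    (hv : v ∈ C) (hz : v ≠ 0) (he : Even (wt v)) :
    IsZeroNeighbor (extCode C) (extVec v) ↔
      ∀ v' : Fin n → ZMod 2, v' ∈ C → v' ≠ 0 → Even (wt v') → ¬ supp v' ⊂ supp v := by
  constructor
  · rintro ⟨-, -, hmin⟩ v' hv' hz' he' hss
    refine hmin (extVec v') ⟨v', hv', rfl⟩ (fun h0 => hz' (extVec_eq_zero.1 h0)) ?_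
    rw [supp_extVec_of_even he, supp_extVec_of_even he']
    exact Finset.map_ssubset_map.2 hss
  · intro hmin
    refine ⟨⟨v, hv, rfl⟩, fun h0 => hz (extVec_eq_zero.1 h0), ?_⟩
    rintro u' ⟨v', hv', rfl⟩ hz' hss
    have hz'' : v' ≠ 0 := fun h0 => hz' (by rw [h0]; exact extVec_eq_zero.2 rfl)
    -- last coordinate is not in supp (extVec v)
    have hlast : Fin.last n ∉ supp (extVec v) := by
      rw [supp_extVec_of_even he]
      intro hmem
      obtain ⟨i, -, hie⟩ := Finset.mem_map.1 hmem
      exact absurd hie (Fin.castSucc_lt_last i).ne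
    have he' : Even (wt v') := by
      by_contra hodd
      have : Fin.last n ∈ supp (extVec v') := by
        rw [mem_supp, extVec_last]
        intro h0
        exact hodd ((wt_even_iff v').1 h0)
      exact hlast (hss.1 this)
    have hss' : supp v' ⊂ supp v := by
      rw [supp_extVec_of_even he, supp_extVec_of_even he'] at hss
      exact Finset.map_ssubset_map.1 hss
    exact hmin v' hv' hz'' he' hss'

/-- the canonical decomposition from a strictly smaller support codeword -/
lemma decomp_of_ssubset {n : ℕ} {C : Submodule (ZMod 2) (Fin n → ZMod 2)}
    {v u : Fin n → ZMod 2} (hv : v ∈ C) (hu : u ∈ C) (hzu : u ≠ 0)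
    (hss : supp u ⊂ supp v) :
    (v + u) ∈ C ∧ (v + u) ≠ 0 ∧ Disjoint (supp u) (supp (v + u)) ∧ v = u + (v + u) := by
  refine ⟨C.add_mem hv hu, ?_, ?_, (add_add_self v u).symm⟩
  · intro h0
    apply hss.2
    intro i hi
    have : v i = u i := by
      have := congrFun h0 i
      have e : (v + u) i = v i + u i := rfl
      rw [e] at this
      rcases zmod2_cases (u i) with h1 | h1 <;> rcases zmod2_cases (v i) with h2 | h2 <;>
        simp_all
    rw [mem_supp] at hi ⊢
    rwa [← this]
  · rw [supp_add_of_subset hss.1]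
    exact Finset.disjoint_sdiff

lemma onlyOdd_of {n : ℕ} {C : Submodule (ZMod 2) (Fin n → ZMod 2)} {v : Fin n → ZMod 2}
    (hC : v ∈ C) (hz : v ≠ 0) (he : Even (wt v))
    (heM : ∀ v' ∈ C, v' ≠ 0 → Even (wt v') → ¬ supp v' ⊂ supp v)
    (hnz : ¬ IsZeroNeighbor (C : Set (Fin n → ZMod 2)) v) :
    OnlyOddDecomposable C v := by
  have hoddmin : ∃ u ∈ C, u ≠ 0 ∧ supp u ⊂ supp v := by
    by_contra hc
    push_neg at hc
    exact hnz ⟨hC, hz, fun v' hv' hz' => hc v' hv' hz'⟩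
  obtain ⟨u, hu, hzu, hss⟩ := hoddmin
  obtain ⟨hmem, hnz2, hdisj, hdec⟩ := decomp_of_ssubset hC hu hzu hss
  refine ⟨he, ⟨u, v + u, hu, hmem, hzu, hnz2, hdisj, hdec⟩, ?_⟩
  intro v1 v2 h1 h2 hz1 hz2 hd hsum
  have hsupp : supp v = supp v1 ∪ supp v2 := by rw [hsum]; exact supp_add_of_disjoint hd
  have hs1 : supp v1 ⊂ supp v := by
    rw [hsupp]
    refine Finset.ssubset_iff_of_subset Finset.subset_union_left |>.2 ?_
    obtain ⟨i, hi⟩ := Finset.nonempty_iff_ne_empty.2 (fun h0 => hz2 (supp_eq_empty.1 h0))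
    exact ⟨i, Finset.mem_union_right _ hi, Finset.disjoint_left.1 hd.symm hi⟩
  have hs2 : supp v2 ⊂ supp v := by
    rw [hsupp]
    refine Finset.ssubset_iff_of_subset Finset.subset_union_right |>.2 ?_
    obtain ⟨i, hi⟩ := Finset.nonempty_iff_ne_empty.2 (fun h0 => hz1 (supp_eq_empty.1 h0))
    exact ⟨i, Finset.mem_union_left _ hi, Finset.disjoint_left.1 hd hi⟩
  constructor
  · exact Nat.not_even_iff_odd.1 fun hev => heM v1 h1 hz1 hev hs1
  · exact Nat.not_even_iff_odd.1 fun hev => heM v2 h2 hz2 hev hs2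

lemma of_onlyOdd {n : ℕ} {C : Submodule (ZMod 2) (Fin n → ZMod 2)} {v : Fin n → ZMod 2}
    (hC : v ∈ C) (h : OnlyOddDecomposable C v) :
    v ≠ 0 ∧ (∀ v' ∈ C, v' ≠ 0 → Even (wt v') → ¬ supp v' ⊂ supp v) ∧
      ¬ IsZeroNeighbor (C : Set (Fin n → ZMod 2)) v := by
  obtain ⟨he, ⟨v1, v2, h1, h2, hz1, hz2, hd, hsum⟩, hodd⟩ := h
  have hsupp : supp v = supp v1 ∪ supp v2 := by rw [hsum]; exact supp_add_of_disjoint hd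
  have hz : v ≠ 0 := by
    intro h0
    rw [h0] at hsupp
    obtain ⟨i, hi⟩ := Finset.nonempty_iff_ne_empty.2 (fun h0' => hz1 (supp_eq_empty.1 h0'))
    have : i ∈ supp (0 : Fin n → ZMod 2) := hsupp ▸ Finset.mem_union_left _ hi
    simp [mem_supp] at this
  have hs1 : supp v1 ⊂ supp v := by
    rw [hsupp]
    refine Finset.ssubset_iff_of_subset Finset.subset_union_left |>.2 ?_
    obtain ⟨i, hi⟩ := Finset.nonempty_iff_ne_empty.2 (fun h0 => hz2 (supp_eq_empty.1 h0))
    exact ⟨i, Finset.mem_union_right _ hi, Finset.disjoint_left.1 hd.symm hi⟩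
  refine ⟨hz, ?_, ?_⟩
  · intro u hu hzu hev hss
    obtain ⟨hmem, hnz2, hdisj, hdec⟩ := decomp_of_ssubset hC hu hzu hss
    have := (hodd u (v + u) hu hmem hzu hnz2 hdisj hdec).1
    exact Nat.not_even_iff_odd.2 this hev
  · rintro ⟨-, -, hmin⟩
    exact hmin v1 h1 hz1 hs1


theorem lwd_even_from_extended {n : ℕ}
    (C : Submodule (ZMod 2) (Fin n → ZMod 2))
    (htrans : ∀ i j : Fin (n + 1), ∃ π : Equiv.Perm (Fin (n + 1)),
      IsAut (extCode C) π ∧ π i = j)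
    (w : ℕ) (hw : Even w) :
    (Lw (C : Set (Fin n → ZMod 2)) w : ℚ) =
        (((n : ℚ) + 1 - w) / (n + 1)) * Lw (extCode C) w - Nw C w ∧
      (Lw (C : Set (Fin n → ZMod 2)) w : ℚ) ≤
        (((n : ℚ) + 1 - w) / (n + 1)) * Lw (extCode C) w := by
  classical
  set S : Finset (Fin (n+1) → ZMod 2) :=
    Finset.univ.filter (fun u => IsZeroNeighbor (extCode C) u ∧ wt u = w) with hSdef
  -- transitivity: counts with i in support are all equal
  have hcard_eq : ∀ i j : Fin (n+1),
      (S.filter (fun u => u i ≠ 0)).card = (S.filter (fun u => u j ≠ 0)).card := by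
    intro i j
    obtain ⟨π, hA, hπ⟩ := htrans i j
    refine Finset.card_nbij' (permVec π) (permVec π.symm) ?_ ?_ ?_ ?_
    · intro u hu
      simp only [hSdef, Finset.mem_coe, Finset.mem_filter, Finset.mem_univ, true_and] at hu ⊢
      obtain ⟨⟨hzn, hwt⟩, hi⟩ := hu
      refine ⟨⟨zn_permVec hA hzn, by rw [wt_permVec, hwt]⟩, ?_⟩
      show u (π.symm j) ≠ 0
      rw [← hπ, π.symm_apply_apply]
      exact hi
    · intro u hu
      simp only [hSdef, Finset.mem_coe, Finset.mem_filter, Finset.mem_univ, true_and] at hu ⊢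
      obtain ⟨⟨hzn, hwt⟩, hj⟩ := hu
      refine ⟨⟨zn_permVec (isAut_symm hA) hzn, by rw [wt_permVec, hwt]⟩, ?_⟩
      show u (π.symm.symm i) ≠ 0
      rw [Equiv.symm_symm, hπ]
      exact hj
    · intro u _; exact permVec_permVec_symm π u
    · intro u _; exact permVec_symm_permVec π u
  -- double counting
  have hdouble : ∑ i : Fin (n+1), (S.filter (fun u => u i ≠ 0)).card = w * S.card := by
    have h1 : ∀ i : Fin (n+1), (S.filter (fun u => u i ≠ 0)).card
        = ∑ u ∈ S, if u i ≠ 0 then 1 else 0 := fun i => Finset.card_filter _ _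
    rw [Finset.sum_congr rfl (fun i _ => h1 i), Finset.sum_comm]
    have h2 : ∀ u ∈ S, (∑ i : Fin (n+1), if u i ≠ 0 then 1 else 0) = w := by
      intro u hu
      simp only [hSdef, Finset.mem_filter, Finset.mem_univ, true_and] at hu
      rw [← hu.2, wt, supp, ← Finset.card_filter]
    rw [Finset.sum_congr rfl h2, Finset.sum_const, smul_eq_mul, mul_comm]
  -- all counts equal, so (n+1) * (last-count) = w * |S|
  have hlast : (n+1) * (S.filter (fun u => u (Fin.last n) ≠ 0)).card = w * S.card := by
    rw [← hdouble]
    rw [Finset.sum_congr rfl (fun i _ => hcard_eq i (Fin.last n))]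
    simp [Finset.sum_const, mul_comm]
  -- the finset B of even-minimal codewords of weight w
  set B : Finset (Fin n → ZMod 2) :=
    Finset.univ.filter (fun v => v ∈ C ∧ v ≠ 0 ∧ wt v = w ∧
      ∀ v' ∈ C, v' ≠ 0 → Even (wt v') → ¬ supp v' ⊂ supp v) with hBdef
  have hBcard : B.card = (S.filter (fun u => ¬ u (Fin.last n) ≠ 0)).card := by
    refine Finset.card_nbij' extVec (fun u k => u (Fin.castSucc k)) ?_ ?_ ?_ ?_
    · intro v hv
      simp only [hBdef, Finset.mem_coe, Finset.mem_filter, Finset.mem_univ, true_and] at hv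
      obtain ⟨hC, hz, hwt, hmin⟩ := hv
      have he : Even (wt v) := hwt ▸ hw
      simp only [hSdef, Finset.mem_coe, Finset.mem_filter, Finset.mem_univ, true_and, not_not]
      refine ⟨⟨(zn_ext C hC hz he).2 hmin, by rw [wt_extVec_of_even he, hwt]⟩, ?_⟩
      rw [extVec_last, (wt_even_iff v).2 he]
    · intro u hu
      simp only [hSdef, Finset.mem_coe, Finset.mem_filter, Finset.mem_univ, true_and, not_not] at hu
      obtain ⟨⟨hzn, hwt⟩, hl⟩ := hu
      obtain ⟨v, hvC, rfl⟩ := hzn.1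
      have hjv : (fun (u : Fin (n+1) → ZMod 2) (k : Fin n) => u (Fin.castSucc k)) (extVec v) = v :=
        funext fun k => extVec_castSucc v k
      rw [hjv]
      have he : Even (wt v) := by
        rw [← wt_even_iff]
        rwa [extVec_last] at hl
      have hz : v ≠ 0 := fun h0 => hzn.2.1 (by rw [h0]; exact extVec_eq_zero.2 rfl)
      simp only [hBdef, Finset.mem_coe, Finset.mem_filter, Finset.mem_univ, true_and]
      exact ⟨hvC, hz, by rw [← wt_extVec_of_even he, hwt], (zn_ext C hvC hz he).1 hzn⟩
    · intro v _
      exact funext fun k => extVec_castSucc v k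
    · intro u hu
      simp only [hSdef, Finset.mem_coe, Finset.mem_filter, Finset.mem_univ, true_and, not_not] at hu
      obtain ⟨⟨hzn, hwt⟩, hl⟩ := hu
      obtain ⟨v, hvC, rfl⟩ := hzn.1
      have hjv : (fun (u : Fin (n+1) → ZMod 2) (k : Fin n) => u (Fin.castSucc k)) (extVec v) = v :=
        funext fun k => extVec_castSucc v k
      rw [hjv]
  -- split B into zero neighbors of C and only-odd-decomposable words
  set A : Finset (Fin n → ZMod 2) :=
    Finset.univ.filter (fun v => IsZeroNeighbor (C : Set (Fin n → ZMod 2)) v ∧ wt v = w)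
      with hAdef
  set D : Finset (Fin n → ZMod 2) :=
    Finset.univ.filter (fun v => v ∈ C ∧ OnlyOddDecomposable C v ∧ wt v = w) with hDdef
  have hsplit : A.card + D.card = B.card := by
    have hfA : B.filter (fun v => IsZeroNeighbor (C : Set (Fin n → ZMod 2)) v) = A := by
      ext v
      simp only [hBdef, hAdef, Finset.mem_filter, Finset.mem_univ, true_and]
      constructor
      · rintro ⟨⟨-, -, hwt, -⟩, hzn⟩; exact ⟨hzn, hwt⟩
      · rintro ⟨hzn, hwt⟩
        exact ⟨⟨hzn.1, hzn.2.1, hwt, fun v' hv' hz' _ => hzn.2.2 v' hv' hz'⟩, hzn⟩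
    have hfD : B.filter (fun v => ¬ IsZeroNeighbor (C : Set (Fin n → ZMod 2)) v) = D := by
      ext v
      simp only [hBdef, hDdef, Finset.mem_filter, Finset.mem_univ, true_and]
      constructor
      · rintro ⟨⟨hC, hz, hwt, hmin⟩, hnzn⟩
        exact ⟨hC, onlyOdd_of hC hz (hwt ▸ hw) hmin hnzn, hwt⟩
      · rintro ⟨hC, hood, hwt⟩
        obtain ⟨hz, hmin, hnzn⟩ := of_onlyOdd hC hood
        exact ⟨⟨hC, hz, hwt, hmin⟩, hnzn⟩
    rw [← hfA, ← hfD]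
    exact Finset.card_filter_add_card_filter_not _
  -- identify Lw / Nw with finset cards
  have hLwC : Lw (C : Set (Fin n → ZMod 2)) w = A.card := by
    rw [Lw, Set.ncard_eq_toFinset_card']
    congr 1
    ext v
    simp [hAdef, Set.mem_toFinset]
  have hLwE : Lw (extCode C) w = S.card := by
    rw [Lw, Set.ncard_eq_toFinset_card']
    congr 1
    ext v
    simp [hSdef, Set.mem_toFinset]
  have hNw : Nw C w = D.card := by
    rw [Nw, Set.ncard_eq_toFinset_card']
    congr 1
    ext v
    simp [hDdef, Set.mem_toFinset]
  -- final arithmetic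
  have e2 : (S.filter (fun u => u (Fin.last n) ≠ 0)).card + B.card = S.card := by
    rw [hBcard]
    exact Finset.card_filter_add_card_filter_not _
  have hn : ((n : ℚ) + 1) ≠ 0 := by positivity
  have c1 : ((S.filter (fun u => u (Fin.last n) ≠ 0)).card : ℚ)
      + (A.card : ℚ) + (D.card : ℚ) = (S.card : ℚ) := by
    rw [← hsplit] at e2
    have := congrArg (Nat.cast (R := ℚ)) e2
    push_cast at this
    linarith
  have c2 : ((n : ℚ) + 1) * ((S.filter (fun u => u (Fin.last n) ≠ 0)).card : ℚ)
      = (w : ℚ) * (S.card : ℚ) := by exact_mod_cast congrArg (Nat.cast (R := ℚ)) hlast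
  have key : (Lw (C : Set (Fin n → ZMod 2)) w : ℚ) =
      (((n : ℚ) + 1 - w) / (n + 1)) * Lw (extCode C) w - Nw C w := by
    rw [hLwC, hLwE, hNw]
    field_simp
    nlinarith [c1, c2]
  exact ⟨key, by rw [key]; exact sub_le_self _ (by positivity)⟩
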